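/- Fix α and r with 0 < α < 1 < r. Then lim_{p → -∞} Θ_p{α, r} = arccos √((1 - α²)/(r² - α²)). -/

import Mathlib

open Real Filter

/-- `F_p(s, α, r) = ((1 - s^{2p})/(1 - r^{2p}))(r² + α²)
  + ((s^{2p} - r^{2p})/(1 - r^{2p}))(1 + α² r²) - s² - α² r² s⁻²`. -/
noncomputable def Fp (p α r s : ℝ) : ℝ :=
  (1 - s ^ (2 * p)) / (1 - r ^ (2 * p)) * (r ^ 2 + α ^ 2) +
  (s ^ (2 * p) - r ^ (2 * p)) / (1 - r ^ (2 * p)) * (1 + α ^ 2 * r ^ 2) -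
  s ^ 2 - α ^ 2 * r ^ 2 * s ^ (-2 : ℝ)

/-- The period function `Θ_p{α, r} = ∫_1^r ds / √(F_p(s, α, r))`. -/
noncomputable def Theta (p α r : ℝ) : ℝ :=
  ∫ s in (1 : ℝ)..r, (Real.sqrt (Fp p α r s))⁻¹

open MeasureTheory Set

set_option maxHeartbeats 1000000

lemma Fp_eq (p α r s : ℝ) (hs : 0 < s) (hR : r ^ (2*p) ≠ 1) :
    Fp p α r s = (s^2 - α^2) * (r^2 - s^2) / s^2
      - (s^(2*p) - r^(2*p)) / (1 - r^(2*p)) * ((r^2-1)*(1-α^2)) := by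
  have h2 : s ^ (-2:ℝ) = (s^2)⁻¹ := by
    rw [show (-2:ℝ) = -(2:ℝ) by ring, Real.rpow_neg hs.le, Real.rpow_two]
  have h1 : (1:ℝ) - r^(2*p) ≠ 0 := sub_ne_zero.2 (Ne.symm hR)
  have hs2 : s^2 ≠ 0 := pow_ne_zero 2 hs.ne'
  unfold Fp
  rw [h2]
  field_simp
  ring

lemma aux_Finf_lb1 {α r : ℝ} (hα₀ : 0 < α) (hα₁ : α < 1) (hr : 1 < r) {s : ℝ}
    (h1 : 1 ≤ s) (h2 : s ≤ r) :
    (1-α^2)*(r+1)*(r-s) ≤ (s^2 - α^2) * (r^2 - s^2) / s^2 := by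
  rw [le_div_iff₀ (by positivity)]
  have hs2 : 1 ≤ s^2 := one_le_pow₀ h1
  have inner : 0 ≤ (r+s)*(s^2-α^2) - (r+1)*(1-α^2)*s^2 := by
    nlinarith [mul_nonneg (sub_nonneg.2 h1) (sq_nonneg α), mul_nonneg (sub_nonneg.2 hs2) (sq_nonneg α)]
  nlinarith [mul_nonneg (sub_nonneg.2 h2) inner]

lemma aux_Finf_lb2 {α r : ℝ} (hα₀ : 0 < α) (hα₁ : α < 1) (hr : 1 < r) {s : ℝ}
    (h1 : 1 ≤ s) (h2 : s ≤ r) :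
    (r^2-1)*(1-α^2) - (2*r+2*r^2)*(s-1) ≤ (s^2 - α^2) * (r^2 - s^2) / s^2 := by
  rw [le_div_iff₀ (by positivity)]
  have hs2 : 1 ≤ s^2 := one_le_pow₀ h1
  have key : (s^2-α^2)*(r^2-s^2) - ((r^2-1)*(1-α^2) - (2*r+2*r^2)*(s-1))*s^2
      = (s^2-1)*(α^2*r^2-s^2) + 2*r*(1+r)*(s-1)*s^2 := by ring
  nlinarith [mul_nonneg (sub_nonneg.2 hs2) (mul_nonneg (sq_nonneg α) (sq_nonneg r)),
    mul_nonneg (mul_nonneg (sub_nonneg.2 h1) (sq_nonneg s)) (by nlinarith : (0:ℝ) ≤ 2*r*(1+r) - (s+1))]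

lemma aux_Finf_lb3 {α r : ℝ} (hα₀ : 0 < α) (hα₁ : α < 1) (hr : 1 < r) {s : ℝ}
    (h1 : 1 ≤ s) (h2 : s ≤ r) :
    (1-α^2)*(r^2-s^2) ≤ (s^2 - α^2) * (r^2 - s^2) / s^2 := by
  rw [le_div_iff₀ (by positivity)]
  have hs2 : 1 ≤ s^2 := one_le_pow₀ h1
  have h3 : s^2 ≤ r^2 := by nlinarith
  nlinarith [mul_nonneg (mul_nonneg (sq_nonneg α) (sub_nonneg.2 hs2)) (sub_nonneg.2 h3)]

lemma aux_sup {c q₀ q : ℝ} (hc : 1 < c) (h1 : 1 ≤ q₀ * Real.log c) (hq : q₀ ≤ q) :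
    q * c^(-q) ≤ q₀ * c^(-q₀) := by
  have hc0 : (0:ℝ) < c := lt_trans one_pos hc
  have hlog : 0 < Real.log c := Real.log_pos hc
  have hq₀ : 0 < q₀ := by nlinarith
  have hexp : 1 + (q - q₀) * Real.log c ≤ c ^ (q - q₀) := by
    rw [Real.rpow_def_of_pos hc0]
    have := Real.add_one_le_exp (Real.log c * (q - q₀))
    nlinarith [this]
  have hpos : (0:ℝ) < c ^ (q - q₀) := Real.rpow_pos_of_pos hc0 _
  have hkey : q ≤ q₀ * c ^ (q - q₀) := by nlinarith
  have hsplit : c^(-q) = (c^(q-q₀))⁻¹ * c^(-q₀) := by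
    rw [← Real.rpow_neg hc0.le, ← Real.rpow_add hc0]; ring_nf
  rw [hsplit, ← mul_assoc]
  have h2 : q * (c^(q-q₀))⁻¹ ≤ q₀ := by
    rw [← div_eq_mul_inv, div_le_iff₀ hpos]; exact hkey
  exact mul_le_mul_of_nonneg_right h2 (Real.rpow_pos_of_pos hc0 _).le

lemma aux_tendsto_q_rpow {c : ℝ} (hc : 1 < c) :
    Tendsto (fun q : ℝ => q * c^(-q)) atTop (nhds 0) := by
  have hc0 : (0:ℝ) < c := lt_trans one_pos hc
  have hlog : 0 < Real.log c := Real.log_pos hc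
  have h1 : Tendsto (fun q : ℝ => q * Real.log c) atTop atTop :=
    Tendsto.atTop_mul_const hlog tendsto_id
  have h2 := (tendsto_pow_mul_exp_neg_atTop_nhds_zero 1).comp h1
  have h3 := h2.const_mul (1 / Real.log c)
  rw [mul_zero] at h3
  refine h3.congr (fun q => ?_)
  simp only [Function.comp, pow_one]
  rw [Real.rpow_def_of_pos hc0]
  field_simp

lemma aux_tendsto_rpow_zero {r : ℝ} (hr : 1 < r) :
    Tendsto (fun q : ℝ => r^(-q)) atTop (nhds 0) := by
  have hr0 : (0:ℝ) < r := lt_trans one_pos hr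
  have h1 : Tendsto (fun q : ℝ => -(q * Real.log r)) atTop atBot :=
    tendsto_neg_atTop_atBot.comp (Tendsto.atTop_mul_const (Real.log_pos hr) tendsto_id)
  have h2 := Real.tendsto_exp_atBot.comp h1
  refine h2.congr (fun q => ?_)
  simp only [Function.comp]
  rw [Real.rpow_def_of_pos hr0]
  ring_nf


lemma arith1 {t a₁ C₁ q₀ u W : ℝ} (ht0 : 0 ≤ t)
    (ha₁ : 0 < a₁) (hC₁ : 0 < C₁) (hu : 0 ≤ u) (hq₀ : 0 < q₀)
    (htw : t * (1 + q₀*u) ≤ 1) (hW : 1 + q₀*u ≤ W) (hq₀4 : C₁ + 1 ≤ q₀ * a₁) :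
    u / W ≤ (1-t)*a₁ - t*(C₁*u) := by
  have hw : (0:ℝ) < 1 + q₀*u := by nlinarith
  have ht1 : t ≤ 1 := by nlinarith
  have hW0 : (0:ℝ) < W := lt_of_lt_of_le hw hW
  have key : u ≤ ((1-t)*a₁ - t*(C₁*u)) * (1 + q₀*u) := by
    nlinarith [mul_le_mul_of_nonneg_right htw (mul_nonneg hC₁.le hu),
      mul_le_mul_of_nonneg_right htw ha₁.le, mul_nonneg (mul_nonneg hq₀.le hu) ha₁.le]
  have hnn : 0 ≤ (1-t)*a₁ - t*(C₁*u) := by nlinarith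
  rw [div_le_iff₀ hW0]
  nlinarith [mul_le_mul_of_nonneg_left hW hnn]


lemma aux_key {α r : ℝ} (hα₀ : 0 < α) (hα₁ : α < 1) (hr : 1 < r) :
    ∃ κ > 0, ∃ P < (0:ℝ), ∀ p ≤ P, ∀ s ∈ Set.Ioo (1:ℝ) r,
      κ * ((s-1)*(r-s)) ≤ Fp p α r s := by
  obtain ⟨c, hc_def⟩ : ∃ x : ℝ, x = (1+r)/2 := ⟨_, rfl⟩
  have hc1 : 1 < c := by rw [hc_def]; linarith
  have hcr : c < r := by rw [hc_def]; linarith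
  have hc0 : (0:ℝ) < c := by linarith
  obtain ⟨K, hK_def⟩ : ∃ x : ℝ, x = (r^2-1)*(1-α^2) := ⟨_, rfl⟩
  have hK : 0 < K := by rw [hK_def]; exact mul_pos (by nlinarith) (by nlinarith)
  obtain ⟨a₀, ha₀_def⟩ : ∃ x : ℝ, x = (1-α^2)*(r+1) := ⟨_, rfl⟩
  have ha₀ : 0 < a₀ := by rw [ha₀_def]; exact mul_pos (by nlinarith) (by nlinarith)
  obtain ⟨a₁, ha₁_def⟩ : ∃ x : ℝ, x = (1-α^2)*(r^2-c^2) := ⟨_, rfl⟩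
  have ha₁ : 0 < a₁ := by
    rw [ha₁_def]
    exact mul_pos (by nlinarith) (by nlinarith [pow_lt_pow_left₀ hcr hc0.le (by norm_num : (2:ℕ) ≠ 0)])
  obtain ⟨C₁, hC₁_def⟩ : ∃ x : ℝ, x = 2*r+2*r^2 := ⟨_, rfl⟩
  have hC₁ : 0 < C₁ := by rw [hC₁_def]; nlinarith only [hr]
  have hev1 : ∀ᶠ q : ℝ in atTop, 1 ≤ q := eventually_ge_atTop 1
  have hev2 : ∀ᶠ q : ℝ in atTop, 1 ≤ q * Real.log c := by
    have := Tendsto.atTop_mul_const (Real.log_pos hc1) (tendsto_id (α := ℝ) (x := atTop))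
    exact this.eventually_ge_atTop 1
  have hev3 : ∀ᶠ q : ℝ in atTop, q * c^(-q) * K / (1 - r^(-q)) ≤ a₀/2 := by
    have hA := aux_tendsto_q_rpow hc1
    have hB := aux_tendsto_rpow_zero hr
    have h := ((hA.mul_const K).div (tendsto_const_nhds.sub hB) (by norm_num)).eventually_lt_const
      (show (0:ℝ)*K/(1-0) < a₀/2 by simpa using by positivity)
    exact h.mono (fun q hq => hq.le)
  have hev4 : ∀ᶠ q : ℝ in atTop, C₁ + 1 ≤ q * a₁ := by
    have := Tendsto.atTop_mul_const ha₁ (tendsto_id (α := ℝ) (x := atTop))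
    exact this.eventually_ge_atTop (C₁ + 1)
  obtain ⟨q₀, hh⟩ := (((hev1.and hev2).and hev3).and hev4).exists
  obtain ⟨⟨⟨hq₀1, hq₀2⟩, hq₀3⟩, hq₀4⟩ := hh
  have hq₀pos : 0 < q₀ := by linarith
  have hrq₀ : r^(-q₀) < 1 := Real.rpow_lt_one_of_one_lt_of_neg hr (by linarith)
  have hrq₀0 : 0 < r^(-q₀) := Real.rpow_pos_of_pos (by linarith) _
  obtain ⟨W, hW_def⟩ : ∃ x : ℝ, x = 1 + q₀*(c-1) := ⟨_, rfl⟩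
  have hW1 : 1 ≤ W := by
    have := mul_nonneg hq₀pos.le (by linarith : (0:ℝ) ≤ c-1)
    rw [hW_def]; linarith only [this]
  have hWpos : (0:ℝ) < W := by linarith
  obtain ⟨κ, hκ_def⟩ : ∃ x : ℝ, x = min (1/W) (a₀/2) / (r-1) := ⟨_, rfl⟩
  have hmin0 : 0 < min (1/W) (a₀/2) := lt_min (by positivity) (by positivity)
  have hκpos : 0 < κ := by rw [hκ_def]; exact div_pos hmin0 (by linarith)
  refine ⟨κ, hκpos, -(q₀/2), by linarith, fun p hp s hs => ?_⟩
  obtain ⟨hs1, hsr⟩ := hs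
  have hs0 : (0:ℝ) < s := by linarith
  obtain ⟨q, hq_def⟩ : ∃ x : ℝ, x = -(2*p) := ⟨_, rfl⟩
  have hq : q₀ ≤ q := by rw [hq_def]; linarith
  have h2p : 2*p = -q := by rw [hq_def]; ring
  have h2pneg : 2*p < 0 := by linarith [hq₀pos, hq]
  obtain ⟨t, ht_def⟩ : ∃ x : ℝ, x = s^(2*p) := ⟨_, rfl⟩
  obtain ⟨R, hR_def⟩ : ∃ x : ℝ, x = r^(2*p) := ⟨_, rfl⟩
  have ht0 : 0 < t := by rw [ht_def]; exact Real.rpow_pos_of_pos hs0 _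
  have ht1 : t < 1 := by rw [ht_def]; exact Real.rpow_lt_one_of_one_lt_of_neg hs1 h2pneg
  have hR0 : 0 < R := by rw [hR_def]; exact Real.rpow_pos_of_pos (by linarith) _
  have hR1 : R < 1 := by rw [hR_def]; exact Real.rpow_lt_one_of_one_lt_of_neg (by linarith) h2pneg
  have hRt : R ≤ t := by
    rw [hR_def, ht_def]; exact Real.rpow_le_rpow_of_nonpos hs0 (by linarith) h2pneg.le
  have h1R : 0 < 1 - R := by linarith
  have hRq₀ : R ≤ r^(-q₀) := by
    rw [hR_def, h2p]; exact Real.rpow_le_rpow_of_exponent_le hr.le (by linarith)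
  obtain ⟨mu, hmu_def⟩ : ∃ x : ℝ, x = (t - R)/(1 - R) := ⟨_, rfl⟩
  have hmu0 : 0 ≤ mu := by rw [hmu_def]; exact div_nonneg (by linarith) h1R.le
  have hmut : mu ≤ t := by
    rw [hmu_def, div_le_iff₀ h1R]
    linarith only [mul_nonneg hR0.le (by linarith only [ht1] : (0:ℝ) ≤ 1 - t)]
  obtain ⟨Fi, hFi_def⟩ : ∃ x : ℝ, x = (s^2 - α^2) * (r^2 - s^2) / s^2 := ⟨_, rfl⟩
  have hR1' : r^(2*p) ≠ 1 := by rw [← hR_def]; exact hR1.ne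
  have hF : Fp p α r s = Fi - mu * K := by
    rw [hFi_def, hmu_def, ht_def, hR_def, hK_def]
    exact Fp_eq p α r s hs0 hR1'
  have hκ1 : κ * (r-s) ≤ min (1/W) (a₀/2) := by
    have h1 : κ * (r-s) ≤ κ * (r-1) := mul_le_mul_of_nonneg_left (by linarith) hκpos.le
    have h2 : κ * (r-1) = min (1/W) (a₀/2) := by
      rw [hκ_def, div_mul_cancel₀ _ (by linarith : (r:ℝ)-1 ≠ 0)]
    linarith only [h1, h2]
  rcases le_or_gt s c with hsc | hsc
  · -- region near 1
    have hsc2 : s^2 ≤ c^2 := pow_le_pow_left₀ hs0.le hsc 2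
    have ha₁le : a₁ ≤ Fi := by
      rw [hFi_def]
      refine le_trans ?_ (aux_Finf_lb3 hα₀ hα₁ hr hs1.le hsr.le)
      rw [ha₁_def]
      have := mul_le_mul_of_nonneg_left (by linarith only [hsc2] : r^2-c^2 ≤ r^2-s^2)
        (by nlinarith only [hα₀, hα₁] : (0:ℝ) ≤ 1-α^2)
      linarith only [this]
    have hlip : K - C₁*(s-1) ≤ Fi := by
      rw [hK_def, hC₁_def, hFi_def]
      exact aux_Finf_lb2 hα₀ hα₁ hr hs1.le hsr.le
    have hber : 1 + q₀*(s-1) ≤ s^q₀ := by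
      have h := one_add_mul_self_le_rpow_one_add (by linarith : (-1:ℝ) ≤ s-1) hq₀1
      rwa [show (1:ℝ) + (s-1) = s by ring] at h
    have hw0 : (0:ℝ) < 1 + q₀*(s-1) := by
      have := mul_nonneg hq₀pos.le (by linarith : (0:ℝ) ≤ s-1)
      linarith only [this]
    have htq₀ : t ≤ (s^q₀)⁻¹ := by
      rw [ht_def, h2p, ← Real.rpow_neg hs0.le]
      exact Real.rpow_le_rpow_of_exponent_le hs1.le (by linarith)
    have hspos : (0:ℝ) < s^q₀ := Real.rpow_pos_of_pos hs0 _
    have htw : t * (1 + q₀*(s-1)) ≤ 1 := by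
      calc t * (1 + q₀*(s-1)) ≤ (s^q₀)⁻¹ * s^q₀ :=
            mul_le_mul htq₀ hber hw0.le (by positivity)
        _ = 1 := inv_mul_cancel₀ hspos.ne'
    have hmain : (s-1)/W ≤ (1-t)*a₁ - t*(C₁*(s-1)) :=
      arith1 ht0.le ha₁ hC₁ (by linarith) hq₀pos htw
        (by rw [hW_def]
            have := mul_le_mul_of_nonneg_left (by linarith : s-1 ≤ c-1) hq₀pos.le
            linarith only [this]) hq₀4
    have hchain : (1-t)*a₁ - t*(C₁*(s-1)) ≤ Fi - mu * K := by
      have h1 : mu*K ≤ t*K := mul_le_mul_of_nonneg_right hmut hK.le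
      have h2 : (1-t)*a₁ ≤ (1-t)*Fi := mul_le_mul_of_nonneg_left ha₁le (by linarith)
      have h3 : t*(K - C₁*(s-1)) ≤ t*Fi := mul_le_mul_of_nonneg_left hlip ht0.le
      nlinarith only [h1, h2, h3]
    have hfin : κ*((s-1)*(r-s)) ≤ (s-1)/W := by
      have hκW : κ*(r-s) ≤ 1/W := le_trans hκ1 (min_le_left _ _)
      have h := mul_le_mul_of_nonneg_right hκW (by linarith : (0:ℝ) ≤ s-1)
      have e : (1/W)*(s-1) = (s-1)/W := by ring
      nlinarith only [h, e]
    rw [hF]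
    exact le_trans hfin (le_trans hmain hchain)
  · -- region near r
    have ha₀le : a₀*(r-s) ≤ Fi := by
      rw [ha₀_def, hFi_def]
      have h := aux_Finf_lb1 hα₀ hα₁ hr hs1.le hsr.le
      nlinarith only [h]
    have hq1 : 1 ≤ q := by linarith
    have hber2 : 1 + q*(s/r - 1) ≤ (s/r)^q := by
      have h := one_add_mul_self_le_rpow_one_add (by
        have : 0 < s/r := by positivity
        linarith : (-1:ℝ) ≤ s/r - 1) hq1
      rwa [show (1:ℝ) + (s/r-1) = s/r by ring] at h
    have et : t = s^(-q) := by rw [ht_def, h2p]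
    have eR : R = r^(-q) := by rw [hR_def, h2p]
    have hfrac : t * (s/r)^q = R := by
      rw [et, eR, Real.div_rpow hs0.le (by linarith : (0:ℝ) ≤ r),
        Real.rpow_neg hs0.le, Real.rpow_neg (by linarith : (0:ℝ) ≤ r)]
      have h1 : s^q ≠ 0 := (Real.rpow_pos_of_pos hs0 q).ne'
      have h2 : r^q ≠ 0 := (Real.rpow_pos_of_pos (by linarith) q).ne'
      field_simp
    have hdivr : 1 - s/r ≤ r - s := by
      have e : 1 - s/r = (r-s)/r := by field_simp
      rw [e]
      exact div_le_self (by linarith) (by linarith)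
    have htR : t - R ≤ t * (q*(r-s)) := by
      have h1 : 1 - (s/r)^q ≤ q*(1 - s/r) := by linarith only [hber2]
      have h2 : q*(1 - s/r) ≤ q*(r-s) := mul_le_mul_of_nonneg_left hdivr (by linarith)
      have h3 : t*(1 - (s/r)^q) ≤ t*(q*(r-s)) :=
        mul_le_mul_of_nonneg_left (le_trans h1 h2) ht0.le
      have e : t*(1 - (s/r)^q) = t - R := by rw [mul_sub, mul_one, hfrac]
      linarith only [h3, e]
    have htc : t ≤ c^(-q) := by
      rw [et]
      exact Real.rpow_le_rpow_of_nonpos hc0 hsc.le (by linarith)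
    have htq : t*q ≤ q₀*c^(-q₀) := by
      have h1 : t*q ≤ c^(-q)*q := mul_le_mul_of_nonneg_right htc (by linarith)
      have h2 := aux_sup hc1 hq₀2 hq
      linarith only [h1, h2]
    have hnum : t - R ≤ (q₀*c^(-q₀))*(r-s) := by
      have h1 : t*(q*(r-s)) = (t*q)*(r-s) := by ring
      have h2 : (t*q)*(r-s) ≤ (q₀*c^(-q₀))*(r-s) :=
        mul_le_mul_of_nonneg_right htq (by linarith)
      linarith only [htR, h1, h2]
    have hmu_le : mu ≤ ((q₀*c^(-q₀))*(r-s))/(1 - r^(-q₀)) := by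
      rw [hmu_def]
      have d1 : (t-R)/(1-R) ≤ (t-R)/(1 - r^(-q₀)) :=
        div_le_div_of_nonneg_left (by linarith) (by linarith) (by linarith)
      have d2 : (t-R)/(1 - r^(-q₀)) ≤ ((q₀*c^(-q₀))*(r-s))/(1 - r^(-q₀)) :=
        div_le_div_of_nonneg_right hnum (by linarith)
      linarith only [d1, d2]
    have hmuK : mu*K ≤ (a₀/2)*(r-s) := by
      have h1 : mu*K ≤ (((q₀*c^(-q₀))*(r-s))/(1 - r^(-q₀)))*K :=
        mul_le_mul_of_nonneg_right hmu_le hK.le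
      have h2 : (((q₀*c^(-q₀))*(r-s))/(1 - r^(-q₀)))*K
          = (q₀*c^(-q₀)*K/(1 - r^(-q₀)))*(r-s) := by ring
      have h3 : (q₀*c^(-q₀)*K/(1 - r^(-q₀)))*(r-s) ≤ (a₀/2)*(r-s) :=
        mul_le_mul_of_nonneg_right hq₀3 (by linarith)
      linarith only [h1, h2, h3]
    have hfin : κ*((s-1)*(r-s)) ≤ (a₀/2)*(r-s) := by
      have hκs : κ*(s-1) ≤ a₀/2 := by
        have h1 : κ*(s-1) ≤ κ*(r-1) := mul_le_mul_of_nonneg_left (by linarith) hκpos.le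
        have h2 : κ * (r-1) = min (1/W) (a₀/2) := by
          rw [hκ_def, div_mul_cancel₀ _ (by linarith : (r:ℝ)-1 ≠ 0)]
        have h3 := min_le_right (1/W) (a₀/2)
        linarith only [h1, h2, h3]
      have h := mul_le_mul_of_nonneg_right hκs (by linarith : (0:ℝ) ≤ r-s)
      nlinarith only [h]
    rw [hF]
    linarith only [hfin, ha₀le, hmuK]

lemma aux_g_integrable {r : ℝ} (hr : 1 < r) {κ : ℝ} (hκ : 0 < κ) :
    IntervalIntegrable (fun s => (Real.sqrt (κ*((s-1)*(r-s))))⁻¹) volume 1 r := by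
  obtain ⟨c, hc_def⟩ : ∃ x : ℝ, x = (1+r)/2 := ⟨_, rfl⟩
  have hc1 : 1 < c := by rw [hc_def]; linarith
  have hcr : c < r := by rw [hc_def]; linarith
  set g : ℝ → ℝ := fun s =>
    (Real.sqrt κ)⁻¹ * ((Real.sqrt (r-c))⁻¹ * (s-1)^(-(1/2):ℝ)
      + (Real.sqrt (c-1))⁻¹ * (r-s)^(-(1/2):ℝ)) with hg_def
  have hg : IntervalIntegrable g volume 1 r := by
    have g1 : IntervalIntegrable (fun s : ℝ => (s-1)^(-(1/2):ℝ)) volume 1 r := by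
      have h := intervalIntegral.intervalIntegrable_rpow' (a := 0) (b := r-1)
        (by norm_num : (-1:ℝ) < -(1/2))
      have h2 := h.comp_sub_right 1
      norm_num at h2
      exact h2
    have g2 : IntervalIntegrable (fun s : ℝ => (r-s)^(-(1/2):ℝ)) volume 1 r := by
      have h := intervalIntegral.intervalIntegrable_rpow' (a := 0) (b := r-1)
        (by norm_num : (-1:ℝ) < -(1/2))
      have h2 := h.comp_sub_left r
      norm_num at h2
      exact h2.symm
    exact ((g1.const_mul _).add (g2.const_mul _)).const_mul _
  apply hg.mono_fun'
  · apply Measurable.aestronglyMeasurable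
    apply Measurable.inv
    exact (Real.continuous_sqrt.measurable).comp
      ((measurable_const.mul ((measurable_id.sub measurable_const).mul
        (measurable_const.sub measurable_id))))
  · rw [Filter.EventuallyLE, ae_restrict_iff' measurableSet_uIoc]
    apply Eventually.of_forall
    intro s hs
    rw [Set.uIoc_of_le hr.le] at hs
    obtain ⟨hs1, hsr⟩ := hs
    have h1 : 0 ≤ s - 1 := by linarith
    have h2 : 0 ≤ r - s := by linarith
    have key : (Real.sqrt (κ*((s-1)*(r-s))))⁻¹
        = (Real.sqrt κ)⁻¹ * ((Real.sqrt (s-1))⁻¹ * (Real.sqrt (r-s))⁻¹) := by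
      rw [Real.sqrt_mul hκ.le, Real.sqrt_mul h1, mul_inv, mul_inv]
    have e1 : (Real.sqrt (s-1))⁻¹ = (s-1)^(-(1/2):ℝ) := by
      rw [Real.rpow_neg h1, Real.sqrt_eq_rpow]
    have e2 : (Real.sqrt (r-s))⁻¹ = (r-s)^(-(1/2):ℝ) := by
      rw [Real.rpow_neg h2, Real.sqrt_eq_rpow]
    have hnorm : ‖(Real.sqrt (κ*((s-1)*(r-s))))⁻¹‖ = (Real.sqrt (κ*((s-1)*(r-s))))⁻¹ :=
      Real.norm_of_nonneg (by positivity)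
    rw [hnorm, key, hg_def]
    rcases le_or_gt s c with hsc | hsc
    · have b1 : (Real.sqrt (r-s))⁻¹ ≤ (Real.sqrt (r-c))⁻¹ := by
        apply inv_anti₀ (Real.sqrt_pos.2 (by linarith))
        exact Real.sqrt_le_sqrt (by linarith)
      have hb : (Real.sqrt (s-1))⁻¹ * (Real.sqrt (r-s))⁻¹
          ≤ (Real.sqrt (r-c))⁻¹ * (s-1)^(-(1/2):ℝ) := by
        rw [← e1, mul_comm ((Real.sqrt (r-c))⁻¹)]
        exact mul_le_mul_of_nonneg_left b1 (by positivity)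
      have hpos2 : (0:ℝ) ≤ (Real.sqrt (c-1))⁻¹ * (r-s)^(-(1/2):ℝ) := by positivity
      have := mul_le_mul_of_nonneg_left (le_add_of_le_of_nonneg hb hpos2)
        (by positivity : (0:ℝ) ≤ (Real.sqrt κ)⁻¹)
      simpa using this
    · have b1 : (Real.sqrt (s-1))⁻¹ ≤ (Real.sqrt (c-1))⁻¹ := by
        apply inv_anti₀ (Real.sqrt_pos.2 (by linarith))
        exact Real.sqrt_le_sqrt (by linarith)
      have hb : (Real.sqrt (s-1))⁻¹ * (Real.sqrt (r-s))⁻¹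
          ≤ (Real.sqrt (c-1))⁻¹ * (r-s)^(-(1/2):ℝ) := by
        rw [← e2]
        exact mul_le_mul_of_nonneg_right b1 (by positivity)
      have hpos2 : (0:ℝ) ≤ (Real.sqrt (r-c))⁻¹ * (s-1)^(-(1/2):ℝ) := by positivity
      have := mul_le_mul_of_nonneg_left (le_add_of_nonneg_of_le hpos2 hb)
        (by positivity : (0:ℝ) ≤ (Real.sqrt κ)⁻¹)
      simpa using this

lemma aux_rpow_tendsto {b : ℝ} (hb : 1 < b) :
    Tendsto (fun p : ℝ => b^(2*p)) atBot (nhds 0) := by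
  have hb0 : (0:ℝ) < b := by linarith
  have h1 : Tendsto (fun p : ℝ => Real.log b * (2*p)) atBot atBot := by
    apply Tendsto.const_mul_atBot (Real.log_pos hb)
    exact (tendsto_id.const_mul_atBot (by norm_num : (0:ℝ) < 2))
  have h2 := Real.tendsto_exp_atBot.comp h1
  refine h2.congr fun p => ?_
  simp only [Function.comp]
  rw [Real.rpow_def_of_pos hb0]

lemma aux_ptwise {α r : ℝ} (hα₀ : 0 < α) (hα₁ : α < 1) (hr : 1 < r) {s : ℝ}
    (hs1 : 1 < s) (hsr : s < r) :
    Tendsto (fun p : ℝ => (Real.sqrt (Fp p α r s))⁻¹) atBot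
      (nhds ((Real.sqrt ((s^2-α^2)*(r^2-s^2)/s^2))⁻¹)) := by
  have hs0 : (0:ℝ) < s := by linarith
  have hts := aux_rpow_tendsto hs1
  have htr := aux_rpow_tendsto (show (1:ℝ) < r by linarith)
  have hmu : Tendsto (fun p : ℝ => (s^(2*p) - r^(2*p))/(1 - r^(2*p)) * ((r^2-1)*(1-α^2)))
      atBot (nhds 0) := by
    have hden : Tendsto (fun p : ℝ => 1 - r^(2*p)) atBot (nhds (1 - 0)) :=
      tendsto_const_nhds.sub htr
    have h := ((hts.sub htr).div hden (by norm_num)).mul_const ((r^2-1)*(1-α^2))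
    simpa using h
  have hFp : Tendsto (fun p : ℝ => Fp p α r s) atBot
      (nhds ((s^2-α^2)*(r^2-s^2)/s^2)) := by
    have h := tendsto_const_nhds (x := (s^2-α^2)*(r^2-s^2)/s^2) (f := atBot (α := ℝ)) |>.sub hmu
    rw [sub_zero] at h
    refine h.congr' ?_
    filter_upwards [eventually_le_atBot (-1 : ℝ)] with p hp
    rw [Fp_eq p α r s hs0]
    exact (Real.rpow_lt_one_of_one_lt_of_neg (by linarith) (by linarith)).ne
  have hFipos : 0 < (s^2-α^2)*(r^2-s^2)/s^2 := by
    apply div_pos (mul_pos (by nlinarith) (by nlinarith)) (by positivity)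
  have hcont : ContinuousAt (fun x : ℝ => (Real.sqrt x)⁻¹) ((s^2-α^2)*(r^2-s^2)/s^2) := by
    apply ContinuousAt.inv₀ Real.continuous_sqrt.continuousAt
    exact (Real.sqrt_pos.2 hFipos).ne'
  exact hcont.tendsto.comp hFp

lemma aux_arccos_form {α r : ℝ} (hα₀ : 0 < α) (hα₁ : α < 1) (hr : 1 < r) :
    π/4 - 1/2 * Real.arcsin ((2 - (r^2+α^2))/(r^2-α^2))
      = Real.arccos (Real.sqrt ((1-α^2)/(r^2-α^2))) := by
  have hd : (0:ℝ) < r^2-α^2 := by nlinarith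
  obtain ⟨x, hx_def⟩ : ∃ x : ℝ, x = (1-α^2)/(r^2-α^2) := ⟨_, rfl⟩
  have hx0 : 0 < x := by rw [hx_def]; apply div_pos (by nlinarith) hd
  have hx1 : x < 1 := by
    rw [hx_def, div_lt_one hd]; nlinarith
  have e : (2 - (r^2+α^2))/(r^2-α^2) = 2*x - 1 := by
    rw [hx_def]; field_simp; ring
  rw [e, ← hx_def]
  obtain ⟨θ, hθ_def⟩ : ∃ y : ℝ, y = Real.arccos (Real.sqrt x) := ⟨_, rfl⟩
  have hcos : Real.cos θ = Real.sqrt x := by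
    rw [hθ_def]
    exact Real.cos_arccos (by linarith [Real.sqrt_nonneg x]) (Real.sqrt_le_one.2 hx1.le)
  have hθ1 : 0 ≤ θ := hθ_def ▸ Real.arccos_nonneg _
  have hθ2 : θ ≤ π/2 := hθ_def ▸ Real.arccos_le_pi_div_two.2 (Real.sqrt_nonneg _)
  have hcos2 : Real.cos (2*θ) = 2*x - 1 := by
    rw [Real.cos_two_mul, hcos, Real.sq_sqrt hx0.le]
  have harccos : Real.arccos (2*x-1) = 2*θ := by
    rw [← hcos2]
    exact Real.arccos_cos (by linarith) (by linarith)
  have harcsin : Real.arcsin (2*x-1) = π/2 - 2*θ := by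
    rw [Real.arcsin_eq_pi_div_two_sub_arccos, harccos]
  rw [harcsin, hθ_def]
  ring

-- integrand inverse-sqrt bound against the canonical bound function
lemma aux_finf_bound {α r : ℝ} (hα₀ : 0 < α) (hα₁ : α < 1) (hr : 1 < r) {s : ℝ}
    (h1 : 1 < s) (h2 : s ≤ r) :
    (Real.sqrt ((s^2-α^2)*(r^2-s^2)/s^2))⁻¹
      ≤ (Real.sqrt (((1-α^2)*(r+1)/(r-1))*((s-1)*(r-s))))⁻¹ := by
  obtain ⟨κ, hκ_def⟩ : ∃ x : ℝ, x = (1-α^2)*(r+1)/(r-1) := ⟨_, rfl⟩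
  have hκ : 0 < κ := by rw [hκ_def]; exact div_pos (mul_pos (by nlinarith) (by linarith)) (by linarith)
  rw [← hκ_def]
  have hle : κ*((s-1)*(r-s)) ≤ (s^2-α^2)*(r^2-s^2)/s^2 := by
    have hb := aux_Finf_lb1 hα₀ hα₁ hr h1.le h2
    have eκ : κ*(r-1) = (1-α^2)*(r+1) := by
      rw [hκ_def, div_mul_cancel₀ _ (by linarith : (r:ℝ)-1 ≠ 0)]
    have h4 := mul_le_mul_of_nonneg_right
      (mul_le_mul_of_nonneg_left (by linarith : s-1 ≤ r-1) hκ.le)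
      (by linarith : (0:ℝ) ≤ r-s)
    have e5 : κ*(r-1)*(r-s) = (1-α^2)*(r+1)*(r-s) := by rw [eκ]
    nlinarith only [hb, h4, e5]
  rcases eq_or_lt_of_le h2 with hsr | hsr
  · subst hsr
    have e0 : κ*((s-1)*(s-s)) = 0 := by ring
    rw [e0]
    simp
  · apply inv_anti₀ (Real.sqrt_pos.2 (mul_pos hκ (mul_pos (by linarith) (by linarith))))
    exact Real.sqrt_le_sqrt hle

lemma aux_finf_integrable {α r : ℝ} (hα₀ : 0 < α) (hα₁ : α < 1) (hr : 1 < r) :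
    IntervalIntegrable (fun s => (Real.sqrt ((s^2-α^2)*(r^2-s^2)/s^2))⁻¹) volume 1 r := by
  have hκ : (0:ℝ) < (1-α^2)*(r+1)/(r-1) := div_pos (mul_pos (by nlinarith) (by linarith)) (by linarith)
  apply (aux_g_integrable hr hκ).mono_fun'
  · apply Measurable.aestronglyMeasurable
    apply Measurable.inv
    apply Real.continuous_sqrt.measurable.comp
    apply Measurable.div
    · exact ((measurable_id.pow_const 2).sub_const _).mul
        ((measurable_const.sub (measurable_id.pow_const 2)))
    · exact measurable_id.pow_const 2
  · rw [Filter.EventuallyLE, ae_restrict_iff' measurableSet_uIoc]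
    apply Eventually.of_forall
    intro s hs
    rw [Set.uIoc_of_le hr.le] at hs
    have hn : ‖(Real.sqrt ((s^2-α^2)*(r^2-s^2)/s^2))⁻¹‖
        = (Real.sqrt ((s^2-α^2)*(r^2-s^2)/s^2))⁻¹ := Real.norm_of_nonneg (by positivity)
    rw [hn]
    exact aux_finf_bound hα₀ hα₁ hr hs.1 hs.2

lemma aux_integral_value {α r : ℝ} (hα₀ : 0 < α) (hα₁ : α < 1) (hr : 1 < r) :
    ∫ s in (1:ℝ)..r, (Real.sqrt ((s^2-α^2)*(r^2-s^2)/s^2))⁻¹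
      = Real.arccos (Real.sqrt ((1-α^2)/(r^2-α^2))) := by
  have hd : (0:ℝ) < r^2-α^2 := by nlinarith
  set G : ℝ → ℝ := fun s => 1/2 * Real.arcsin ((2*s^2 - (r^2+α^2))/(r^2-α^2)) with hG_def
  have hcont : ContinuousOn G (Set.Icc 1 r) := by
    apply Continuous.continuousOn
    apply Continuous.mul continuous_const
    exact Real.continuous_arcsin.comp (((continuous_const.mul
      ((continuous_id.pow 2))).sub continuous_const).div_const _)
  have hderiv : ∀ s ∈ Set.Ioo (1:ℝ) r, HasDerivWithinAt G
      ((Real.sqrt ((s^2-α^2)*(r^2-s^2)/s^2))⁻¹) (Set.Ioi s) s := by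
    intro s hs
    obtain ⟨hs1, hsr⟩ := hs
    have hs0 : (0:ℝ) < s := by linarith
    have hX : (0:ℝ) < (s^2-α^2)*(r^2-s^2) := mul_pos (by nlinarith) (by nlinarith)
    have hu : HasDerivAt (fun x : ℝ => (2*x^2 - (r^2+α^2))/(r^2-α^2))
        ((4*s)/(r^2-α^2)) s := by
      have h := (((hasDerivAt_pow 2 s).const_mul 2).sub_const (r^2+α^2)).div_const (r^2-α^2)
      exact h.congr_deriv (by push_cast; ring)
    have hu1 : (2*s^2 - (r^2+α^2))/(r^2-α^2) ≠ -1 := by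
      intro h
      rw [div_eq_iff hd.ne'] at h
      nlinarith
    have hu2 : (2*s^2 - (r^2+α^2))/(r^2-α^2) ≠ 1 := by
      intro h
      rw [div_eq_iff hd.ne'] at h
      nlinarith
    have harc := (Real.hasDerivAt_arcsin hu1 hu2).comp s hu
    have hG := harc.const_mul (1/2 : ℝ)
    have e1 : 1 - ((2*s^2 - (r^2+α^2))/(r^2-α^2))^2
        = (2/(r^2-α^2))^2 * ((s^2-α^2)*(r^2-s^2)) := by
      field_simp
      ring
    have e2 : Real.sqrt (1 - ((2*s^2 - (r^2+α^2))/(r^2-α^2))^2)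
        = 2/(r^2-α^2) * Real.sqrt ((s^2-α^2)*(r^2-s^2)) := by
      rw [e1, Real.sqrt_mul (sq_nonneg _), Real.sqrt_sq (by positivity)]
    have e3 : Real.sqrt ((s^2-α^2)*(r^2-s^2)/s^2)
        = Real.sqrt ((s^2-α^2)*(r^2-s^2)) / s := by
      rw [Real.sqrt_div hX.le, Real.sqrt_sq hs0.le]
    have hXs : Real.sqrt ((s^2-α^2)*(r^2-s^2)) ≠ 0 := (Real.sqrt_pos.2 hX).ne'
    have eval : 1/2 * (1 / Real.sqrt (1 - ((2*s^2 - (r^2+α^2))/(r^2-α^2))^2)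
        * ((4*s)/(r^2-α^2))) = (Real.sqrt ((s^2-α^2)*(r^2-s^2)/s^2))⁻¹ := by
      rw [e2, e3, inv_div]
      field_simp
      ring
    rw [← eval]
    exact (hG.congr_deriv (by ring)).hasDerivWithinAt
  have hint := aux_finf_integrable hα₀ hα₁ hr
  have hftc := intervalIntegral.integral_eq_sub_of_hasDeriv_right_of_le hr.le hcont hderiv hint
  rw [hftc, hG_def]
  simp only
  have er : (2*r^2 - (r^2+α^2))/(r^2-α^2) = 1 := by
    rw [div_eq_one_iff_eq hd.ne']; ring
  have e1 : (2*(1:ℝ)^2 - (r^2+α^2))/(r^2-α^2) = (2 - (r^2+α^2))/(r^2-α^2) := by norm_num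
  rw [er, e1, Real.arcsin_one, ← aux_arccos_form hα₀ hα₁ hr]
  ring

lemma aux_meas (p α r : ℝ) : Measurable (fun s : ℝ => (Real.sqrt (Fp p α r s))⁻¹) := by
  apply Measurable.inv
  apply Real.continuous_sqrt.measurable.comp
  unfold Fp
  measurability

theorem stmt_9 (α r : ℝ) (hα₀ : 0 < α) (hα₁ : α < 1) (hr : 1 < r) :
    Tendsto (fun p : ℝ => Theta p α r) atBot
      (nhds (Real.arccos (Real.sqrt ((1 - α ^ 2) / (r ^ 2 - α ^ 2))))) := by
  obtain ⟨κ, hκpos, P, hP, hbd⟩ := aux_key hα₀ hα₁ hr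
  have hae_ne : ∀ᵐ s : ℝ ∂volume, s ≠ r := by
    have he : {a : ℝ | ¬ a ≠ r} = {r} := by ext a; simp
    rw [MeasureTheory.ae_iff, he]
    exact measure_singleton r
  have hFpr : ∀ p : ℝ, p ≤ P → Fp p α r r = 0 := by
    intro p hp
    have hR1 : r ^ (2*p) ≠ 1 :=
      (Real.rpow_lt_one_of_one_lt_of_neg hr (by linarith)).ne
    rw [Fp_eq p α r r (by linarith) hR1]
    field_simp
    ring
  have hdct := intervalIntegral.tendsto_integral_filter_of_dominated_convergence
    (μ := volume) (a := 1) (b := r)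
    (F := fun (p : ℝ) (s : ℝ) => (Real.sqrt (Fp p α r s))⁻¹)
    (f := fun s => (Real.sqrt ((s^2-α^2)*(r^2-s^2)/s^2))⁻¹)
    (bound := fun s => (Real.sqrt (κ*((s-1)*(r-s))))⁻¹)
    (Eventually.of_forall (fun p => (aux_meas p α r).aestronglyMeasurable))
    (by -- h_bound
      filter_upwards [eventually_le_atBot P] with p hp
      apply Eventually.of_forall
      intro s hs
      rw [Set.uIoc_of_le hr.le] at hs
      obtain ⟨hs1, hsr⟩ := hs
      have hn : ‖(Real.sqrt (Fp p α r s))⁻¹‖ = (Real.sqrt (Fp p α r s))⁻¹ :=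
        Real.norm_of_nonneg (by positivity)
      rw [hn]
      rcases eq_or_lt_of_le hsr with hsr' | hsr'
      · subst hsr'
        rw [hFpr p hp]
        simp
      · have hFlb := hbd p hp s ⟨hs1, hsr'⟩
        apply inv_anti₀
        · exact Real.sqrt_pos.2 (mul_pos hκpos (mul_pos (by linarith) (by linarith)))
        · exact Real.sqrt_le_sqrt hFlb)
    (aux_g_integrable hr hκpos)
    (by -- h_lim
      filter_upwards [hae_ne] with s hne hs
      rw [Set.uIoc_of_le hr.le] at hs
      exact aux_ptwise hα₀ hα₁ hr hs.1 (lt_of_le_of_ne hs.2 hne))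
  rw [aux_integral_value hα₀ hα₁ hr] at hdct
  exact hdct
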